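/- Let 0 < λ < 1, 0 < q ≤ 1, and let n be a natural number. For every real z with |z| < 1 − λ^{1/q}, Σ_{t=n}^∞ z^t · λ^n · Σ_{m=0}^∞ C(n+m, n)·(−λ)^m·[ĥ_{q(n+m)}(t−n+1) + λ·ĥ_{q(n+m+1)−1}(t−n+1)] = λ^n · z^n · ((1−z)^{q−1} + λ) / ((1−z)^q + λ)^{n+1}, where all inner series converge. (The inner expression is the probability P(N^q(t) = n) that the renewal process with discrete Mittag-Leffler waiting times has exactly n events by time t, and the right-hand side equals G(z)^n·(1−G(z))/(1−z) for the waiting-time probability generating function G(z) = λz/((1−z)^q + λ).) -/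

import Mathlib

open Real

noncomputable def hhat (α x : ℝ) : ℝ :=
  Real.Gamma (x + α) / (Real.Gamma (α + 1) * Real.Gamma x)

lemma hhat_pos {α : ℝ} (hα : -1 < α) (s : ℕ) : 0 < hhat α ((s : ℝ) + 1) := by
  have h1 : (0:ℝ) < (s:ℝ) + 1 + α := by have : (0:ℝ) ≤ s := s.cast_nonneg; linarith
  have h2 : (0:ℝ) < α + 1 := by linarith
  have h3 : (0:ℝ) < (s:ℝ) + 1 := by positivity
  unfold hhat
  positivity

lemma hhat_one {α : ℝ} (hα : -1 < α) : hhat α 1 = 1 := by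
  unfold hhat
  rw [Real.Gamma_one, add_comm, mul_one, div_self (Real.Gamma_pos_of_pos (by linarith)).ne']

lemma hhat_succ {α : ℝ} (hα : -1 < α) (s : ℕ) :
    hhat α ((s : ℝ) + 1 + 1) = hhat α ((s : ℝ) + 1) * (((s : ℝ) + 1 + α) / ((s : ℝ) + 1)) := by
  have h1 : (0:ℝ) < (s:ℝ) + 1 + α := by have : (0:ℝ) ≤ s := s.cast_nonneg; linarith
  have h3 : (0:ℝ) < (s:ℝ) + 1 := by positivity
  have h2 : (0:ℝ) < α + 1 := by linarith
  unfold hhat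
  have e1 : (s:ℝ) + 1 + 1 + α = ((s:ℝ) + 1 + α) + 1 := by ring
  rw [e1, Real.Gamma_add_one h1.ne', Real.Gamma_add_one h3.ne']
  have g1 := (Real.Gamma_pos_of_pos h1).ne'
  have g2 := (Real.Gamma_pos_of_pos h2).ne'
  have g3 := (Real.Gamma_pos_of_pos h3).ne'
  field_simp

lemma hhat_mono {α β : ℝ} (hα : -1 < α) (hβ : α ≤ β) (s : ℕ) :
    hhat α ((s : ℝ) + 1) ≤ hhat β ((s : ℝ) + 1) := by
  have hβ' : -1 < β := lt_of_lt_of_le hα hβ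
  induction s with
  | zero => simp [hhat_one hα, hhat_one hβ']
  | succ s ih =>
      have e : ((s + 1 : ℕ) : ℝ) + 1 = (s : ℝ) + 1 + 1 := by push_cast; ring
      rw [e, hhat_succ hα s, hhat_succ hβ' s]
      have h3 : (0:ℝ) < (s:ℝ) + 1 := by positivity
      have h1 : (0:ℝ) ≤ (s:ℝ) + 1 + α := by have : (0:ℝ) ≤ s := s.cast_nonneg; linarith
      have hd : ((s : ℝ) + 1 + α) / ((s : ℝ) + 1) ≤ ((s : ℝ) + 1 + β) / ((s : ℝ) + 1) := by
        gcongr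
      exact mul_le_mul ih hd (by positivity) (hhat_pos hβ' s).le

lemma hhat_nat (k s : ℕ) : hhat (k : ℝ) ((s : ℝ) + 1) = ((s + k).choose k : ℝ) := by
  unfold hhat
  have e : (s:ℝ) + 1 + k = ((s + k : ℕ) : ℝ) + 1 := by push_cast; ring
  have e2 : (k:ℝ) + 1 = ((k:ℕ):ℝ) + 1 := by norm_num
  have e3 : ((s:ℕ):ℝ) + 1 = ((s:ℕ):ℝ) + 1 := rfl
  rw [e, Real.Gamma_nat_eq_factorial, Real.Gamma_nat_eq_factorial, Real.Gamma_nat_eq_factorial,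
    Nat.cast_choose ℝ (Nat.le_add_left k s)]
  simp

lemma summable_hhat {α : ℝ} (hα : -1 < α) {x : ℝ} (hx : |x| < 1) :
    Summable (fun s : ℕ => hhat α ((s : ℝ) + 1) * x ^ s) := by
  set k : ℕ := ⌈α⌉₊ with hk
  have hsum : Summable (fun s : ℕ => (((s + k).choose k : ℝ)) * |x| ^ s) := by
    have := summable_choose_mul_geometric_of_norm_lt_one (k := k) (r := |x|)
      (by rwa [Real.norm_eq_abs, abs_abs])
    exact this
  apply Summable.of_norm_bounded hsum
  intro s
  rw [Real.norm_eq_abs, abs_mul, abs_pow]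
  have h1 : |hhat α ((s : ℝ) + 1)| = hhat α ((s : ℝ) + 1) := abs_of_pos (hhat_pos hα s)
  rw [h1]
  have h2 : hhat α ((s : ℝ) + 1) ≤ ((s + k).choose k : ℝ) := by
    rw [← hhat_nat k s]
    exact hhat_mono hα (Nat.le_ceil α) s
  exact mul_le_mul_of_nonneg_right h2 (by positivity)

open MeasureTheory in
lemma hasSum_hhat {α : ℝ} (hα : -1 < α) {x : ℝ} (hx : |x| < 1) :
    HasSum (fun s : ℕ => hhat α ((s : ℝ) + 1) * x ^ s) ((1 - x) ^ (-(α + 1)) : ℝ) := by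
  have hx1 : x < 1 := (abs_lt.mp hx).2
  have h1x : (0:ℝ) < 1 - x := by linarith
  have hβ : (0:ℝ) < α + 1 := by linarith
  have hGa := Real.Gamma_pos_of_pos hβ
  -- family of functions
  set F : ℕ → ℝ → ℝ := fun s t => (x ^ s / (s.factorial : ℝ)) * (Real.exp (-t) * t ^ ((s : ℝ) + α))
    with hF
  have hpos : ∀ s : ℕ, (0:ℝ) < (s : ℝ) + α + 1 := by
    intro s; have : (0:ℝ) ≤ s := s.cast_nonneg; linarith
  have hint : ∀ s : ℕ, Integrable (F s) (volume.restrict (Set.Ioi (0:ℝ))) := by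
    intro s
    have := (Real.GammaIntegral_convergent (hpos s)).const_mul (x ^ s / (s.factorial : ℝ))
    simpa [hF, add_sub_cancel_right] using this
  have hval : ∀ (y : ℝ) (s : ℕ),
      ∫ t in Set.Ioi (0:ℝ), (y ^ s / (s.factorial : ℝ)) * (Real.exp (-t) * t ^ ((s : ℝ) + α))
        = hhat α ((s : ℝ) + 1) * y ^ s * Real.Gamma (α + 1) := by
    intro y s
    rw [MeasureTheory.integral_const_mul]
    have e1 : ∫ t in Set.Ioi (0:ℝ), Real.exp (-t) * t ^ ((s : ℝ) + α)
        = Real.Gamma ((s : ℝ) + α + 1) := by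
      rw [Real.Gamma_eq_integral (hpos s)]
      norm_num
    rw [e1]
    unfold hhat
    rw [show (s:ℝ) + 1 + α = (s:ℝ) + α + 1 by ring]
    have hfac : (Real.Gamma ((s:ℝ) + 1)) = (s.factorial : ℝ) := Real.Gamma_nat_eq_factorial s
    rw [hfac]
    have hf0 : (s.factorial : ℝ) ≠ 0 := by positivity
    field_simp
  -- summability of integrals of norms
  have hnormval : ∀ s : ℕ, ∫ t in Set.Ioi (0:ℝ), ‖F s t‖
      = hhat α ((s:ℝ) + 1) * |x| ^ s * Real.Gamma (α + 1) := by
    intro s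
    rw [← hval |x| s]
    rw [← MeasureTheory.integral_indicator measurableSet_Ioi,
        ← MeasureTheory.integral_indicator measurableSet_Ioi]
    congr 1
    funext t
    by_cases ht : t ∈ Set.Ioi (0:ℝ)
    · simp only [Set.indicator_of_mem ht]
      have ht0 : 0 < t := ht
      rw [hF]
      rw [Real.norm_eq_abs, abs_mul, abs_mul, abs_div, abs_pow,
        abs_of_pos (Real.exp_pos _), abs_of_pos (Real.rpow_pos_of_pos ht0 _),
        abs_of_pos (show (0:ℝ) < (s.factorial : ℝ) by positivity)]
    · simp [Set.indicator_of_notMem ht]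
  have hsummable_norm : Summable (fun s : ℕ => ∫ t in Set.Ioi (0:ℝ), ‖F s t‖) := by
    apply Summable.congr (f := fun s : ℕ => hhat α ((s:ℝ)+1) * |x| ^ s * Real.Gamma (α+1))
    · exact (summable_hhat hα (by rwa [abs_abs])).mul_right _
    · intro s; exact (hnormval s).symm
  -- swap sum and integral
  have hswap := MeasureTheory.integral_tsum_of_summable_integral_norm hint hsummable_norm
  -- pointwise tsum
  have hpt : ∀ t ∈ Set.Ioi (0:ℝ), (∑' s : ℕ, F s t)
      = t ^ α * Real.exp (-((1 - x) * t)) := by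
    intro t ht
    have ht0 : (0:ℝ) < t := ht
    have hFt : ∀ s : ℕ, F s t = ((x * t) ^ s / (s.factorial : ℝ)) * (Real.exp (-t) * t ^ α) := by
      intro s
      rw [hF]
      simp only [mul_pow]
      rw [Real.rpow_add ht0, Real.rpow_natCast]
      ring
    have hexp : HasSum (fun s : ℕ => ((x * t) ^ s / (s.factorial : ℝ)))
        (Real.exp (x * t)) := by
      rw [Real.exp_eq_exp_ℝ]; exact NormedSpace.expSeries_div_hasSum_exp (x * t)
    have := (hexp.mul_right (Real.exp (-t) * t ^ α)).tsum_eq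
    calc (∑' s : ℕ, F s t) = ∑' s : ℕ, ((x * t) ^ s / (s.factorial : ℝ)) * (Real.exp (-t) * t ^ α) := by
          exact tsum_congr hFt
      _ = Real.exp (x * t) * (Real.exp (-t) * t ^ α) := this
      _ = t ^ α * Real.exp (-((1 - x) * t)) := by
          rw [show rexp (x*t) * (rexp (-t) * t ^ α) = (rexp (x*t) * rexp (-t)) * t ^ α by ring,
            ← Real.exp_add]
          rw [show x * t + -t = -((1-x)*t) by ring]; ring
  -- value of the integral of the pointwise sum
  have hival : ∫ t in Set.Ioi (0:ℝ), (∑' s : ℕ, F s t)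
      = (1 / (1 - x)) ^ (α + 1) * Real.Gamma (α + 1) := by
    rw [MeasureTheory.setIntegral_congr_fun measurableSet_Ioi hpt]
    have := Real.integral_rpow_mul_exp_neg_mul_Ioi hβ h1x
    simpa [add_sub_cancel_right] using this
  -- combine
  have key : (∑' s : ℕ, hhat α ((s:ℝ)+1) * x ^ s) * Real.Gamma (α + 1)
      = (1 / (1 - x)) ^ (α + 1) * Real.Gamma (α + 1) := by
    rw [← hival, ← hswap]
    rw [← tsum_mul_right]
    exact tsum_congr fun s => (hval x s).symm
  have hsum := summable_hhat hα hx
  have htsum : (∑' s : ℕ, hhat α ((s:ℝ)+1) * x ^ s) = (1 - x) ^ (-(α + 1)) := by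
    have := mul_right_cancel₀ hGa.ne' key
    rw [this, one_div, Real.rpow_neg h1x.le, ← Real.inv_rpow h1x.le]
  rw [← htsum]
  exact hsum.hasSum

lemma summable_term (lam q : ℝ) (hlam0 : 0 < lam) (hlam1 : lam < 1)
    (hq0 : 0 < q) (hq1 : q ≤ 1) (n s : ℕ) :
    Summable (fun m : ℕ =>
      (Nat.choose (n + m) n : ℝ) * (-lam) ^ m *
        (hhat (q * ((n : ℝ) + m)) ((s : ℝ) + 1) +
          lam * hhat (q * ((n : ℝ) + m + 1) - 1) ((s : ℝ) + 1))) := by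
  have hα1 : ∀ m : ℕ, (-1:ℝ) < q * ((n:ℝ) + m) := by
    intro m; have : (0:ℝ) ≤ q * ((n:ℝ) + m) := by positivity
    linarith
  have hα2 : ∀ m : ℕ, (-1:ℝ) < q * ((n:ℝ) + m + 1) - 1 := by
    intro m; have : (0:ℝ) < q * ((n:ℝ) + m + 1) := by positivity
    linarith
  set K : ℕ := n + s with hK
  have hbound_summable : Summable (fun m : ℕ =>
      2 * ((s + n + m + 1 : ℕ) : ℝ) ^ K * lam ^ m) := by
    have h0 := summable_pow_mul_geometric_of_norm_lt_one (R := ℝ) K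
      (r := lam) (by rwa [Real.norm_eq_abs, abs_of_pos hlam0])
    have h1 : Summable (fun m : ℕ => ((m + (s + n + 1) : ℕ) : ℝ) ^ K * lam ^ (m + (s + n + 1))) :=
      h0.comp_injective (add_left_injective (s + n + 1))
    have h2 := (h1.mul_right ((lam ^ (s + n + 1))⁻¹)).mul_left 2
    apply h2.congr
    intro m
    have e : m + (s + n + 1) = s + n + m + 1 := by omega
    rw [e, pow_add]
    field_simp
    ring
  apply Summable.of_norm_bounded hbound_summable
  intro m
  set c : ℕ := n + m + 1 with hc
  have hh1le : hhat (q * ((n:ℝ) + m)) ((s : ℝ) + 1) ≤ ((s + n + m + 1 : ℕ) : ℝ) ^ s := by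
    calc hhat (q * ((n:ℝ) + m)) ((s : ℝ) + 1) ≤ hhat ((c : ℕ) : ℝ) ((s : ℝ) + 1) := by
          apply hhat_mono (hα1 m)
          have h1 : q * ((n:ℝ) + m) ≤ (n:ℝ) + m := by
            nlinarith [Nat.cast_nonneg (α := ℝ) n, Nat.cast_nonneg (α := ℝ) m]
          have : ((c:ℕ):ℝ) = (n:ℝ) + m + 1 := by rw [hc]; push_cast; ring
          linarith [this]
      _ = ((s + c).choose c : ℝ) := hhat_nat c s
      _ = ((c + s).choose s : ℝ) := by rw [Nat.add_comm s c, Nat.choose_symm_add]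
      _ ≤ ((c + s) ^ s : ℕ) := by exact_mod_cast Nat.cast_le.mpr (Nat.choose_le_pow _ _)
      _ = ((s + n + m + 1 : ℕ) : ℝ) ^ s := by rw [show c + s = s + n + m + 1 by omega]; push_cast; ring
  have hh2le : hhat (q * ((n:ℝ) + m + 1) - 1) ((s : ℝ) + 1) ≤ ((s + n + m + 1 : ℕ) : ℝ) ^ s := by
    calc hhat (q * ((n:ℝ) + m + 1) - 1) ((s : ℝ) + 1) ≤ hhat ((c : ℕ) : ℝ) ((s : ℝ) + 1) := by
          apply hhat_mono (hα2 m)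
          have h1 : q * ((n:ℝ) + m + 1) ≤ (n:ℝ) + m + 1 := by
            nlinarith [Nat.cast_nonneg (α := ℝ) n, Nat.cast_nonneg (α := ℝ) m]
          have : ((c:ℕ):ℝ) = (n:ℝ) + m + 1 := by rw [hc]; push_cast; ring
          linarith [this]
      _ = ((s + c).choose c : ℝ) := hhat_nat c s
      _ = ((c + s).choose s : ℝ) := by rw [Nat.add_comm s c, Nat.choose_symm_add]
      _ ≤ ((c + s) ^ s : ℕ) := by exact_mod_cast Nat.cast_le.mpr (Nat.choose_le_pow _ _)
      _ = ((s + n + m + 1 : ℕ) : ℝ) ^ s := by rw [show c + s = s + n + m + 1 by omega]; push_cast; ring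
  have hchle : ((n + m).choose n : ℝ) ≤ ((s + n + m + 1 : ℕ) : ℝ) ^ n := by
    calc ((n + m).choose n : ℝ) ≤ (((n + m) ^ n : ℕ) : ℝ) := by
          exact_mod_cast Nat.cast_le.mpr (Nat.choose_le_pow _ _)
      _ ≤ ((s + n + m + 1 : ℕ) : ℝ) ^ n := by
          push_cast
          apply pow_le_pow_left₀ (by positivity)
          push_cast; linarith [Nat.cast_nonneg (α := ℝ) s]
  have hpos1 := hhat_pos (hα1 m) s
  have hpos2 := hhat_pos (hα2 m) s
  rw [Real.norm_eq_abs, abs_mul, abs_mul, abs_pow, abs_neg, abs_of_pos hlam0,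
    Nat.abs_cast, abs_of_pos (by positivity)]
  calc ((n + m).choose n : ℝ) * lam ^ m *
        (hhat (q * ((n:ℝ) + m)) ((s : ℝ) + 1) +
          lam * hhat (q * ((n:ℝ) + m + 1) - 1) ((s : ℝ) + 1))
      ≤ ((s + n + m + 1 : ℕ) : ℝ) ^ n * lam ^ m *
        (((s + n + m + 1 : ℕ) : ℝ) ^ s + lam * ((s + n + m + 1 : ℕ) : ℝ) ^ s) := by
        apply mul_le_mul (mul_le_mul_of_nonneg_right hchle (by positivity)) ?_ (by positivity)
          (by positivity)
        apply add_le_add hh1le (mul_le_mul_of_nonneg_left hh2le hlam0.le)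
    _ ≤ 2 * ((s + n + m + 1 : ℕ) : ℝ) ^ K * lam ^ m := by
        rw [hK, pow_add]
        nlinarith [mul_nonneg (mul_nonneg (mul_nonneg
          (pow_nonneg (Nat.cast_nonneg (α := ℝ) (s+n+m+1)) n)
          (pow_nonneg (Nat.cast_nonneg (α := ℝ) (s+n+m+1)) s))
          (pow_nonneg hlam0.le m)) (by linarith : (0:ℝ) ≤ 1 - lam)]

lemma hasSum_aux {lam q : ℝ} (hlam0 : 0 < lam) (hq0 : 0 < q) (n m : ℕ)
    {u : ℝ} (hu : |u| < 1) :
    HasSum (fun s : ℕ =>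
      (hhat (q * ((n : ℝ) + m)) ((s : ℝ) + 1) +
        lam * hhat (q * ((n : ℝ) + m + 1) - 1) ((s : ℝ) + 1)) * u ^ s)
      ((1 - u) ^ (-(q * ((n : ℝ) + m)) - 1) + lam * (1 - u) ^ (-(q * ((n : ℝ) + m + 1)))) := by
  have hα1 : (-1:ℝ) < q * ((n:ℝ) + m) := by
    have : (0:ℝ) ≤ q * ((n:ℝ) + m) := by positivity
    linarith
  have hα2 : (-1:ℝ) < q * ((n:ℝ) + m + 1) - 1 := by
    have : (0:ℝ) < q * ((n:ℝ) + m + 1) := by positivity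
    linarith
  have h1 := hasSum_hhat hα1 hu
  have h2 := (hasSum_hhat hα2 hu).mul_left lam
  have h := h1.add h2
  have hfun : (fun s : ℕ =>
      (hhat (q * ((n : ℝ) + m)) ((s : ℝ) + 1) +
        lam * hhat (q * ((n : ℝ) + m + 1) - 1) ((s : ℝ) + 1)) * u ^ s)
      = fun s : ℕ => hhat (q * ((n : ℝ) + m)) ((s : ℝ) + 1) * u ^ s +
        lam * (hhat (q * ((n : ℝ) + m + 1) - 1) ((s : ℝ) + 1) * u ^ s) :=
    funext fun s => by ring
  rw [hfun, show (-(q * ((n:ℝ) + m)) - 1) = -(q * ((n:ℝ) + m) + 1) by ring,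
      show (-(q * ((n:ℝ) + m + 1))) = -(q * ((n:ℝ) + m + 1) - 1 + 1) by ring]
  exact h

lemma hasSum_m {lam q : ℝ} (hlam0 : 0 < lam) (hlam1 : lam < 1)
    (hq0 : 0 < q) (hq1 : q ≤ 1) (n : ℕ) {u r : ℝ}
    (hu : |u| < 1 - lam ^ (1 / q)) (hr : |r| = lam) :
    HasSum (fun m : ℕ => ((n + m).choose n : ℝ) * r ^ m *
        ((1 - u) ^ (-(q * ((n : ℝ) + m)) - 1) + lam * (1 - u) ^ (-(q * ((n : ℝ) + m + 1)))))
      (((1 - u) ^ (-(q * (n : ℝ)) - 1) + lam * (1 - u) ^ (-(q * ((n : ℝ) + 1)))) *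
        (1 / (1 - r * (1 - u) ^ (-q)) ^ (n + 1))) := by
  have hlq : 0 < lam ^ (1 / q) := Real.rpow_pos_of_pos hlam0 _
  have hu1 : |u| < 1 := by linarith
  have h1u : 0 < 1 - u := by
    have := (abs_lt.mp hu1).2; linarith
  have hlt : lam < (1 - u) ^ q := by
    have h2 : lam ^ (1 / q) < 1 - u := by
      have := (abs_lt.mp hu).2; linarith
    have h3 : (lam ^ (1 / q)) ^ q < (1 - u) ^ q :=
      Real.rpow_lt_rpow (by positivity) h2 hq0
    rwa [← Real.rpow_mul hlam0.le, one_div_mul_cancel hq0.ne', Real.rpow_one] at h3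
  set e : ℝ := (1 - u) ^ (-q) with he
  have hepos : 0 < e := Real.rpow_pos_of_pos h1u _
  have hP : (1 - u) ^ q * e = 1 := by
    rw [he, ← Real.rpow_add h1u]; simp
  have hw : |r * e| < 1 := by
    rw [abs_mul, hr, abs_of_pos hepos]
    have hPpos : 0 < (1 - u) ^ q := Real.rpow_pos_of_pos h1u _
    rw [he, Real.rpow_neg h1u.le]
    rw [mul_inv_lt_iff₀ hPpos, one_mul]
    exact hlt
  have hgeom := hasSum_choose_mul_geometric_of_norm_lt_one (𝕜 := ℝ) n
    (r := r * e) (by rwa [Real.norm_eq_abs])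
  have h := hgeom.mul_left ((1 - u) ^ (-(q * (n : ℝ)) - 1) + lam * (1 - u) ^ (-(q * ((n : ℝ) + 1))))
  have hfun : (fun m : ℕ => ((n + m).choose n : ℝ) * r ^ m *
        ((1 - u) ^ (-(q * ((n : ℝ) + m)) - 1) + lam * (1 - u) ^ (-(q * ((n : ℝ) + m + 1)))))
      = fun m : ℕ => ((1 - u) ^ (-(q * (n : ℝ)) - 1) + lam * (1 - u) ^ (-(q * ((n : ℝ) + 1)))) *
        (((m + n).choose n : ℝ) * (r * e) ^ m) := by
    funext m
    have hA1 : (1-u) ^ (-(q * ((n:ℝ) + m)) - 1) = (1-u) ^ (-(q * (n:ℝ)) - 1) * e ^ m := by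
      rw [he, ← Real.rpow_natCast ((1-u) ^ (-q)) m, ← Real.rpow_mul h1u.le,
        ← Real.rpow_add h1u]
      congr 1
      ring
    have hA2 : (1-u) ^ (-(q * ((n:ℝ) + m + 1))) = (1-u) ^ (-(q * ((n:ℝ) + 1))) * e ^ m := by
      rw [he, ← Real.rpow_natCast ((1-u) ^ (-q)) m, ← Real.rpow_mul h1u.le,
        ← Real.rpow_add h1u]
      congr 1
      ring
    rw [hA1, hA2, Nat.add_comm n m, mul_pow]
    ring
  rw [hfun]
  exact h

/-- The generating function in `t` of the probability `P(N^q(t) = n)` of the discrete-time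
fractional Poisson process: for `|z| < 1 − λ^{1/q}`,
`Σ_{t=n}^∞ z^t · λ^n · Σ_m C(n+m,n)(−λ)^m [ĥ_{q(n+m)}(t−n+1) + λ·ĥ_{q(n+m+1)−1}(t−n+1)]
  = λ^n z^n ((1−z)^{q−1} + λ)/((1−z)^q + λ)^{n+1}`,
where all inner series converge. -/
theorem pgf_event_counts (lam q : ℝ) (hlam0 : 0 < lam) (hlam1 : lam < 1)
    (hq0 : 0 < q) (hq1 : q ≤ 1) (n : ℕ) (z : ℝ) (hz : |z| < 1 - lam ^ (1 / q)) :
    (∀ t : ℕ, n ≤ t → Summable (fun m : ℕ =>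
        (Nat.choose (n + m) n : ℝ) * (-lam) ^ m *
          (hhat (q * ((n : ℝ) + m)) ((t : ℝ) - n + 1) +
            lam * hhat (q * ((n : ℝ) + m + 1) - 1) ((t : ℝ) - n + 1)))) ∧
    HasSum (fun s : ℕ => z ^ (s + n) * lam ^ n * ∑' m : ℕ,
        (Nat.choose (n + m) n : ℝ) * (-lam) ^ m *
          (hhat (q * ((n : ℝ) + m)) ((s : ℝ) + 1) +
            lam * hhat (q * ((n : ℝ) + m + 1) - 1) ((s : ℝ) + 1)))
      (lam ^ n * z ^ n * ((1 - z) ^ (q - 1) + lam) / ((1 - z) ^ q + lam) ^ (n + 1)) := by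
  have hlq : 0 < lam ^ (1 / q) := Real.rpow_pos_of_pos hlam0 _
  have hz1 : |z| < 1 := by linarith
  have habs : |(|z|)| < 1 - lam ^ (1 / q) := by rwa [abs_abs]
  have habs1 : |(|z|)| < 1 := by rwa [abs_abs]
  have h1z : (0:ℝ) < 1 - z := by have := (abs_lt.mp hz1).2; linarith
  have hα1 : ∀ m : ℕ, (-1:ℝ) < q * ((n:ℝ) + m) := by
    intro m; have : (0:ℝ) ≤ q * ((n:ℝ) + m) := by positivity
    linarith
  have hα2 : ∀ m : ℕ, (-1:ℝ) < q * ((n:ℝ) + m + 1) - 1 := by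
    intro m; have : (0:ℝ) < q * ((n:ℝ) + m + 1) := by positivity
    linarith
  constructor
  · intro t ht
    have e : (t:ℝ) - n + 1 = (((t - n : ℕ)):ℝ) + 1 := by
      rw [Nat.cast_sub ht]
    rw [e]
    exact summable_term lam q hlam0 hlam1 hq0 hq1 n (t - n)
  set term : ℕ → ℕ → ℝ := fun m s =>
    ((n + m).choose n : ℝ) * (-lam) ^ m *
      (hhat (q * ((n:ℝ) + m)) ((s:ℝ) + 1) +
        lam * hhat (q * ((n:ℝ) + m + 1) - 1) ((s:ℝ) + 1)) with hterm
  set G : ℕ × ℕ → ℝ := fun p => (z ^ (p.2 + n) * lam ^ n) * term p.1 p.2 with hGdef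
  -- fiber HasSum over s (with z)
  have hz_fiber : ∀ m : ℕ, HasSum (fun s : ℕ => G (m, s))
      ((((n + m).choose n : ℝ) * (-lam) ^ m * (z ^ n * lam ^ n)) *
        ((1 - z) ^ (-(q * ((n:ℝ) + m)) - 1) + lam * (1 - z) ^ (-(q * ((n:ℝ) + m + 1))))) := by
    intro m
    have h := (hasSum_aux hlam0 hq0 n m hz1).mul_left
      (((n + m).choose n : ℝ) * (-lam) ^ m * (z ^ n * lam ^ n))
    have hfun : (fun s : ℕ => G (m, s)) = fun s : ℕ =>
        (((n + m).choose n : ℝ) * (-lam) ^ m * (z ^ n * lam ^ n)) *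
          ((hhat (q * ((n:ℝ) + m)) ((s:ℝ) + 1) +
            lam * hhat (q * ((n:ℝ) + m + 1) - 1) ((s:ℝ) + 1)) * z ^ s) := by
      funext s
      rw [hGdef, hterm]
      simp only [pow_add]
      ring
    rw [hfun]
    exact h
  -- abs equality
  have habseq : ∀ m s : ℕ, |G (m, s)| =
      (((n + m).choose n : ℝ) * lam ^ m * (|z| ^ n * lam ^ n)) *
        ((hhat (q * ((n:ℝ) + m)) ((s:ℝ) + 1) +
          lam * hhat (q * ((n:ℝ) + m + 1) - 1) ((s:ℝ) + 1)) * |z| ^ s) := by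
    intro m s
    have hpos1 := hhat_pos (hα1 m) s
    have hpos2 := hhat_pos (hα2 m) s
    have hsum : (0:ℝ) < hhat (q * ((n:ℝ) + m)) ((s:ℝ) + 1) +
        lam * hhat (q * ((n:ℝ) + m + 1) - 1) ((s:ℝ) + 1) := by positivity
    rw [hGdef, hterm]
    simp only []
    rw [abs_mul, abs_mul, abs_mul, abs_mul, abs_pow, abs_pow, abs_pow, abs_neg,
      abs_of_pos hlam0, Nat.abs_cast, abs_of_pos hsum, pow_add]
    ring
  -- abs fiber hasSum
  have habs_fiber : ∀ m : ℕ, HasSum (fun s : ℕ => |G (m, s)|)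
      ((((n + m).choose n : ℝ) * lam ^ m * (|z| ^ n * lam ^ n)) *
        ((1 - |z|) ^ (-(q * ((n:ℝ) + m)) - 1) + lam * (1 - |z|) ^ (-(q * ((n:ℝ) + m + 1))))) := by
    intro m
    have h := (hasSum_aux hlam0 hq0 n m habs1).mul_left
      (((n + m).choose n : ℝ) * lam ^ m * (|z| ^ n * lam ^ n))
    rw [funext (habseq m)]
    exact h
  -- summability of |G|
  have hGabs : Summable (fun p : ℕ × ℕ => |G p|) := by
    apply (summable_prod_of_nonneg (fun p => abs_nonneg (G p))).mpr
    refine ⟨fun m => (habs_fiber m).summable, ?_⟩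
    have hm := (hasSum_m hlam0 hlam1 hq0 hq1 n habs
      (r := lam) (abs_of_pos hlam0)).summable.mul_left (|z| ^ n * lam ^ n)
    apply hm.congr
    intro m
    rw [(habs_fiber m).tsum_eq]
    ring
  have hGsum : Summable G := summable_abs_iff.mp hGabs
  -- compute the total sum
  have htsum : ∑' p : ℕ × ℕ, G p =
      lam ^ n * z ^ n * ((1 - z) ^ (q - 1) + lam) / ((1 - z) ^ q + lam) ^ (n + 1) := by
    rw [Summable.tsum_prod' hGsum (fun m => (hz_fiber m).summable)]
    rw [tsum_congr (fun m => (hz_fiber m).tsum_eq)]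
    have houter := (hasSum_m hlam0 hlam1 hq0 hq1 n hz
      (r := -lam) (by rw [abs_neg, abs_of_pos hlam0])).mul_left (z ^ n * lam ^ n)
    have hfun2 : (fun m : ℕ => (((n + m).choose n : ℝ) * (-lam) ^ m * (z ^ n * lam ^ n)) *
        ((1 - z) ^ (-(q * ((n:ℝ) + m)) - 1) + lam * (1 - z) ^ (-(q * ((n:ℝ) + m + 1)))))
        = fun m : ℕ => (z ^ n * lam ^ n) * (((n + m).choose n : ℝ) * (-lam) ^ m *
          ((1 - z) ^ (-(q * ((n:ℝ) + m)) - 1) + lam * (1 - z) ^ (-(q * ((n:ℝ) + m + 1))))) := by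
      funext m; ring
    rw [hfun2, houter.tsum_eq]
    -- final algebra
    have hPpos : (0:ℝ) < (1 - z) ^ q := Real.rpow_pos_of_pos h1z _
    have hPlam : (0:ℝ) < (1 - z) ^ q + lam := by positivity
    have hPn : ((1 - z) ^ q) ^ (n + 1) = (1 - z) ^ (q * ((n:ℝ) + 1)) := by
      rw [← Real.rpow_natCast ((1 - z) ^ q) (n + 1), ← Real.rpow_mul h1z.le]
      congr 1
      push_cast; ring
    have h1 : (1 - z) ^ (-(q * (n:ℝ)) - 1) * ((1 - z) ^ q) ^ (n + 1) = (1 - z) ^ (q - 1) := by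
      rw [hPn, ← Real.rpow_add h1z]
      congr 1; ring
    have h2 : (1 - z) ^ (-(q * ((n:ℝ) + 1))) * ((1 - z) ^ q) ^ (n + 1) = 1 := by
      rw [hPn, ← Real.rpow_add h1z, show -(q * ((n:ℝ) + 1)) + q * ((n:ℝ) + 1) = 0 by ring,
        Real.rpow_zero]
    have hden : 1 - (-lam) * (1 - z) ^ (-q) = ((1 - z) ^ q + lam) * ((1 - z) ^ q)⁻¹ := by
      rw [Real.rpow_neg h1z.le]
      field_simp
      ring
    rw [hden, mul_pow, one_div, mul_inv, inv_pow, inv_inv]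
    rw [show ((1 - z) ^ (-(q * (n:ℝ)) - 1) + lam * (1 - z) ^ (-(q * ((n:ℝ) + 1)))) *
        ((((1 - z) ^ q + lam) ^ (n + 1))⁻¹ * ((1 - z) ^ q) ^ (n + 1)) =
      ((1 - z) ^ (-(q * (n:ℝ)) - 1) * ((1 - z) ^ q) ^ (n + 1) +
        lam * ((1 - z) ^ (-(q * ((n:ℝ) + 1))) * ((1 - z) ^ q) ^ (n + 1))) *
        (((1 - z) ^ q + lam) ^ (n + 1))⁻¹ by ring]
    rw [h1, h2, mul_one]
    rw [div_eq_mul_inv]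
    ring
  -- assemble
  have hmain : HasSum (fun p : ℕ × ℕ => G (p.2, p.1)) (∑' p : ℕ × ℕ, G p) :=
    (Equiv.prodComm ℕ ℕ).hasSum_iff.mpr hGsum.hasSum
  have hfib : ∀ s : ℕ, HasSum (fun m : ℕ => G (m, s))
      (z ^ (s + n) * lam ^ n * ∑' m : ℕ, term m s) := by
    intro s
    have hs : Summable (fun m : ℕ => G (m, s)) := hmain.summable.prod_factor s
    have h := hs.hasSum
    have : ∑' m : ℕ, G (m, s) = z ^ (s + n) * lam ^ n * ∑' m : ℕ, term m s := by
      rw [hGdef]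
      simp only []
      rw [tsum_mul_left, mul_assoc]
    rwa [this] at h
  have hfinal := HasSum.prod_fiberwise hmain hfib
  rwa [htsum] at hfinal
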